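/- arXiv:1602.00837 — 4 statements merged into one kernel-verified Lean document; each statement's English description precedes it below -/
import Mathlib

section
/- If f(x) is a polynomial over F_q (q = 2^n) such that f(x)+f(y)+f(z)+f(x+y+z) = 0 as a polynomial in F_q[x,y,z], then every monomial of f of degree ≥ 2 has degree a power of 2; i.e., f is a q-affine polynomial. -/
lemma odd_choose_pow_add (m : ℕ) : ∀ r < 2 ^ m, Odd (Nat.choose (2 ^ m + r) (2 ^ m)) := by
  induction m with
  | zero => intro r hr; interval_cases r; decide
  | succ m ih =>
    intro r hr
    have h2 : Fact (Nat.Prime 2) := ⟨Nat.prime_two⟩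
    have hl := @Choose.choose_modEq_choose_mod_mul_choose_div_nat
      (2 ^ (m + 1) + r) (2 ^ (m + 1)) 2 h2
    have e1 : 2 ^ (m + 1) % 2 = 0 := by
      simp [pow_succ, Nat.mul_mod_left]
    have e2 : (2 ^ (m + 1) + r) / 2 = 2 ^ m + r / 2 := by
      rw [pow_succ, mul_comm, Nat.mul_add_div (by norm_num)]
    have e3 : 2 ^ (m + 1) / 2 = 2 ^ m := by
      rw [pow_succ, Nat.mul_div_cancel _ (by norm_num)]
    rw [e1, e2, e3, Nat.choose_zero_right, one_mul] at hl
    have hih := ih (r / 2) (by omega)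
    rw [Nat.odd_iff] at hih ⊢
    unfold Nat.ModEq at hl
    omega

lemma pow_two_of_choose_even {k : ℕ} (hk : 2 ≤ k)
    (h : ∀ a, 0 < a → a < k → 2 ∣ Nat.choose k a) : ∃ i, k = 2 ^ i := by
  by_contra hc
  push_neg at hc
  set m := Nat.log 2 k with hm
  have h1 : 2 ^ m ≤ k := Nat.pow_log_le_self 2 (by omega)
  have h2 : k < 2 ^ (m + 1) := Nat.lt_pow_succ_log_self (by norm_num) k
  have h3 : 2 ^ m < k := lt_of_le_of_ne h1 (fun e => hc m e.symm)
  have hodd := odd_choose_pow_add m (k - 2 ^ m) (by omega)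
  rw [Nat.add_sub_cancel' h1, Nat.odd_iff] at hodd
  obtain ⟨t, ht⟩ := h (2 ^ m) (by positivity) h3
  omega

open MvPolynomial in
theorem stmt2 (n : ℕ) (f : Polynomial (GaloisField 2 n))
    (h : Polynomial.aeval (X 0 : MvPolynomial (Fin 3) (GaloisField 2 n)) f
        + Polynomial.aeval (X 1 : MvPolynomial (Fin 3) (GaloisField 2 n)) f
        + Polynomial.aeval (X 2 : MvPolynomial (Fin 3) (GaloisField 2 n)) f
        + Polynomial.aeval (X 0 + X 1 + X 2 : MvPolynomial (Fin 3) (GaloisField 2 n)) f = 0) :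
    ∀ k, f.coeff k ≠ 0 → k = 0 ∨ ∃ i : ℕ, k = 2 ^ i := by
  set R := GaloisField 2 n
  -- map the three-variable identity into R[Y][X] via X 0 ↦ X, X 1 ↦ C Y, X 2 ↦ 0
  have h2 := congrArg (MvPolynomial.aeval
      (![Polynomial.X, Polynomial.C Polynomial.X, 0] : Fin 3 → Polynomial (Polynomial R))) h
  simp only [map_add, map_zero, ← Polynomial.aeval_algHom_apply, MvPolynomial.aeval_X,
    Matrix.cons_val_zero, Matrix.cons_val_one, Matrix.head_cons, Matrix.cons_val_two,
    Matrix.tail_cons, add_zero] at h2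
  rw [Polynomial.aeval_eq_sum_range, Polynomial.aeval_eq_sum_range,
      Polynomial.aeval_eq_sum_range, Polynomial.aeval_eq_sum_range] at h2
  -- key coefficient identity
  have key : ∀ a b : ℕ, 0 < a → 0 < b →
      f.coeff (a + b) * (Nat.choose (a + b) a : R) = 0 := by
    intro a b ha hb
    have h3 := congrArg (fun p : Polynomial (Polynomial R) => (p.coeff a).coeff b) h2
    simp only [Polynomial.coeff_add, Polynomial.finset_sum_coeff, Polynomial.coeff_smul,
      Polynomial.coeff_zero, Polynomial.coeff_X_pow, ← Polynomial.C_pow, Polynomial.coeff_C,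
      Polynomial.coeff_X_add_C_pow, Polynomial.coeff_mul_natCast, zero_pow_eq,
      apply_ite (fun p : Polynomial (Polynomial R) => p.coeff a),
      apply_ite (fun p : Polynomial R => p.coeff b), Polynomial.coeff_one, ite_self,
      ha.ne', hb.ne', if_neg, if_false, smul_zero, mul_zero, Finset.sum_const_zero, zero_add,
      smul_eq_mul] at h3
    rw [Finset.sum_eq_single (a + b)] at h3
    · simpa [Nat.add_sub_cancel_left, hb.ne'] using h3.symm
    · intro i _ hi
      rcases Nat.lt_or_ge i a with h' | h'
      · simp [Nat.sub_eq_zero_of_le h'.le, hb.ne']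
      · have : ¬ (b = i - a) := fun e => hi (by omega)
        simp [this]
    · intro hni
      rw [Finset.mem_range, not_lt] at hni
      rw [Polynomial.coeff_eq_zero_of_natDegree_lt (by omega), zero_mul]
  intro k hk
  by_contra hcon
  push_neg at hcon
  obtain ⟨hk0, hpow⟩ := hcon
  have hk2 : 2 ≤ k := by
    rcases Nat.lt_or_ge k 2 with h' | h'
    · interval_cases k
      · exact (hk0 rfl).elim
      · exact (hpow 0 (by norm_num)).elim
    · exact h'
  refine hpow _ (pow_two_of_choose_even hk2 fun a ha hak => ?_).choose_spec
  have hkey := key a (k - a) ha (by omega)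
  rw [Nat.add_sub_cancel' hak.le] at hkey
  have hzero : (Nat.choose k a : R) = 0 := by
    rcases mul_eq_zero.mp hkey with h' | h'
    · exact absurd h' hk
    · exact h'
  exact (CharP.cast_eq_zero_iff R 2 _).mp hzero
end

section
/- Let q = 2^n and r an odd integer with r ≥ 3. Then (x+y)^2 does not divide the polynomial x^r + y^r + z^r + (x+y+z)^r in F_2[x,y,z]. -/
open MvPolynomial in
theorem stmt4 (r : ℕ) (hr : Odd r) (hr3 : 3 ≤ r) :
    ¬ (((X 0 + X 1 : MvPolynomial (Fin 3) (ZMod 2)) ^ 2) ∣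
      (X 0 ^ r + X 1 ^ r + X 2 ^ r + (X 0 + X 1 + X 2) ^ r)) := by
  rintro ⟨Q, hQ⟩
  have h2p : (2 : MvPolynomial (Fin 3) (ZMod 2)) = 0 := by
    exact_mod_cast CharP.cast_eq_zero (MvPolynomial (Fin 3) (ZMod 2)) 2
  have hrp : ((r : ℕ) : MvPolynomial (Fin 3) (ZMod 2)) = 1 := by
    obtain ⟨k, hk⟩ := hr
    rw [hk]; push_cast; rw [h2p]; ring
  have hd := congrArg (pderiv (R := ZMod 2) 0) hQ
  simp [pderiv_pow, pderiv_X, Pi.single_apply, hrp, h2p] at hd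
  have he := congrArg (aeval (![X 0, X 0, X 2] : Fin 3 → MvPolynomial (Fin 3) (ZMod 2))) hd
  simp [CharTwo.add_self_eq_zero] at he
  have hne : (Finsupp.single (2 : Fin 3) (r - 1) : Fin 3 →₀ ℕ) ≠
      Finsupp.single (0 : Fin 3) (r - 1) := by
    intro h
    have h0 := DFunLike.congr_fun h 0
    simp [Finsupp.single_apply] at h0
    omega
  have hc := congrArg (coeff (Finsupp.single 0 (r - 1))) he
  rw [coeff_add, coeff_X_pow, coeff_X_pow, if_pos rfl, if_neg hne, coeff_zero] at hc
  simp at hc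
end

section
/- Let r ≥ 3 be an odd integer and let φ_r(x,y,z) = (x^r + y^r + z^r + (x+y+z)^r)/((x+y)(x+z)(y+z)) in F_2[x,y,z]. Then (x+y) does not divide φ_r. -/
open MvPolynomial in
theorem stmt5 (r : ℕ) (hr : Odd r) (hr3 : 3 ≤ r) (φ : MvPolynomial (Fin 3) (ZMod 2))
    (hφ : ((X 0 + X 1) * (X 0 + X 2) * (X 1 + X 2)) * φ
        = X 0 ^ r + X 1 ^ r + X 2 ^ r + (X 0 + X 1 + X 2) ^ r) :
    ¬ ((X 0 + X 1 : MvPolynomial (Fin 3) (ZMod 2)) ∣ φ) := by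
  rintro ⟨ψ, rfl⟩
  set g : MvPolynomial (Fin 3) (ZMod 2) := (X 0 + X 2) * (X 1 + X 2) * ψ with hg
  have h2 : ((X 0 + X 1 : MvPolynomial (Fin 3) (ZMod 2)))^2 * g
      = X 0 ^ r + X 1 ^ r + X 2 ^ r + (X 0 + X 1 + X 2) ^ r := by
    rw [← hφ, hg]; ring
  have hd := congrArg (pderiv (1 : Fin 3)) h2
  have hsmul2 : ∀ p : MvPolynomial (Fin 3) (ZMod 2), (2 : ℕ) • p = 0 := by
    intro p; rw [two_smul]; exact CharTwo.add_self_eq_zero p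
  obtain ⟨k, rfl⟩ := hr
  have hodd : ∀ p : MvPolynomial (Fin 3) (ZMod 2), (2*k+1) • p = p := by
    intro p
    rw [add_smul, one_smul, mul_comm, mul_smul, hsmul2, smul_zero, zero_add]
  rw [pderiv_mul] at hd
  have hsq : (pderiv (1 : Fin 3)) ((X 0 + X 1 : MvPolynomial (Fin 3) (ZMod 2))^2) = 0 := by
    rw [Derivation.leibniz_pow, hsmul2]
  rw [hsq, zero_mul, zero_add] at hd
  simp only [map_add, Derivation.leibniz_pow, pderiv_X, Pi.single_eq_same,
    Pi.single_apply, if_neg (by decide : ¬ (0:Fin 3) = 1), if_neg (by decide : ¬ (2:Fin 3) = 1),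
    smul_zero, smul_eq_mul, mul_zero, mul_one, zero_add, add_zero, hodd] at hd
  -- apply evaluation y ↦ x
  have he := congrArg (aeval (R := ZMod 2) ![X 0, X 0, X 2] :
    MvPolynomial (Fin 3) (ZMod 2) →ₐ[ZMod 2] MvPolynomial (Fin 3) (ZMod 2)) hd
  simp only [map_mul, map_add, map_pow, aeval_X, Matrix.cons_val_zero, Matrix.cons_val_one,
    Matrix.head_cons, Matrix.cons_val_two, Matrix.tail_cons,
    CharTwo.add_self_eq_zero (X 0 : MvPolynomial (Fin 3) (ZMod 2)), zero_add,
    ne_eq, OfNat.ofNat_ne_zero, not_false_eq_true, zero_pow, zero_mul] at he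
  have hk : 1 ≤ k := by omega
  have hne : ¬ (Finsupp.single (2:Fin 3) (2*k+1-1) = Finsupp.single (0:Fin 3) (2*k+1-1)) := by
    rw [Finsupp.single_eq_single_iff]
    rintro (⟨h, -⟩ | ⟨h, -⟩)
    · exact absurd h (by decide)
    · omega
  have hco := congrArg (coeff (Finsupp.single (0 : Fin 3) (2*k+1-1))) he
  rw [coeff_zero, coeff_add, coeff_X_pow, coeff_X_pow, if_pos rfl, if_neg hne] at hco
  simp at hco
end

section
/- Let q = 2^n and c ∈ F_{q^3} with c + c^q + c^{q^2} = 0 and c ≠ 0. Then the map L : F_{q^3} → F_{q^3}, L(x) = x(x+c)(x+c^q)(x+c^{q^2}), has 0 as its only zero in F_{q^3}, hence (being F_2-linear) is a bijection of F_{q^3}. -/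
theorem stmt12 (n : ℕ) (hn : 0 < n) (c : GaloisField 2 (3 * n))
    (hc : c + c ^ (2 ^ n) + c ^ ((2 ^ n) ^ 2) = 0)
    (hcq : c ^ (2 ^ n) ≠ c) :
    (∀ x : GaloisField 2 (3 * n), x ^ (2 ^ n) = x →
        (x * (x + c) * (x + c ^ (2 ^ n)) * (x + c ^ ((2 ^ n) ^ 2)) = 0 ↔ x = 0)) ∧
    Set.BijOn (fun x : GaloisField 2 (3 * n) =>
        x * (x + c) * (x + c ^ (2 ^ n)) * (x + c ^ ((2 ^ n) ^ 2)))
      {x | x ^ (2 ^ n) = x} {x | x ^ (2 ^ n) = x} := by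
  have h2 : (2 : GaloisField 2 (3 * n)) = 0 := by
    have := CharP.cast_eq_zero (GaloisField 2 (3 * n)) 2
    exact_mod_cast this
  have hchar : ∀ a : GaloisField 2 (3 * n), a + a = 0 := by
    intro a; have h : a + a = 2 * a := by ring
    rw [h, h2, zero_mul]
  have hcard : Nat.card (GaloisField 2 (3 * n)) = 2 ^ (3 * n) :=
    GaloisField.card 2 (3 * n) (by omega)
  haveI : Fintype (GaloisField 2 (3 * n)) := Fintype.ofFinite _
  have hcardF : Fintype.card (GaloisField 2 (3 * n)) = 2 ^ (3 * n) := by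
    rw [← Nat.card_eq_fintype_card]; exact hcard
  have hexp : 2 ^ n * (2 ^ n) ^ 2 = 2 ^ (3 * n) := by
    rw [← pow_mul, ← pow_add]
    congr 1
    omega
  have hq3 : ∀ x : GaloisField 2 (3 * n), x ^ (2 ^ n * (2 ^ n) ^ 2) = x := by
    intro x
    have h := FiniteField.pow_card x
    rwa [hcardF, ← hexp] at h
  have frob : ∀ x y : GaloisField 2 (3 * n),
      (x + y) ^ (2 ^ n) = x ^ (2 ^ n) + y ^ (2 ^ n) := fun x y =>
    add_pow_char_pow x y 2 n
  have hc0 : c ≠ 0 := by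
    intro h; apply hcq; rw [h, zero_pow]; positivity
  have hzero : ∀ x : GaloisField 2 (3 * n), x ^ (2 ^ n) = x →
      (x * (x + c) * (x + c ^ (2 ^ n)) * (x + c ^ ((2 ^ n) ^ 2)) = 0 ↔ x = 0) := by
    intro x hx
    constructor
    · intro h
      rcases mul_eq_zero.mp h with h | h3
      rcases mul_eq_zero.mp h with h | h2'
      rcases mul_eq_zero.mp h with h0 | h1
      · exact h0
      · -- x = c, contradicting c^q ≠ c
        exfalso
        have hxc : x = c := by linear_combination h1 - hchar c
        rw [hxc] at hx
        exact hcq hx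
      · -- x = c^q, then c^{q^2} = c^q, forcing c = 0
        exfalso
        have hxc : x = c ^ (2 ^ n) := by linear_combination h2' - hchar (c ^ (2 ^ n))
        rw [hxc] at hx
        have hx2 : c ^ ((2 ^ n) ^ 2) = c ^ (2 ^ n) := by
          rw [pow_two, pow_mul]; exact hx
        apply hc0
        linear_combination hc - hx2 - hchar (c ^ (2 ^ n))
      · -- x = c^{q^2}, then c = c^{q^2}, forcing c = 0
        exfalso
        have hxc : x = c ^ ((2 ^ n) ^ 2) := by
          linear_combination h3 - hchar (c ^ ((2 ^ n) ^ 2))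
        rw [hxc] at hx
        have hcc : c = c ^ ((2 ^ n) ^ 2) := by
          have h1 : (c ^ ((2 ^ n) ^ 2)) ^ (2 ^ n) = c := by
            rw [← pow_mul, mul_comm ((2 ^ n) ^ 2) (2 ^ n)]
            exact hq3 c
          rw [hx] at h1
          exact h1.symm
        apply hc0
        have hq0 : c ^ (2 ^ n) = 0 := by
          linear_combination hc + hcc - hchar c
        have h3' := hq3 c
        rw [pow_mul, hq0, zero_pow] at h3'
        · exact h3'.symm
        · positivity
    · intro h; rw [h]; ring
  refine ⟨hzero, ?_⟩
  have hadd : ∀ x y : GaloisField 2 (3 * n),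
      (x + y) * (x + y + c) * (x + y + c ^ (2 ^ n)) * (x + y + c ^ ((2 ^ n) ^ 2)) =
      x * (x + c) * (x + c ^ (2 ^ n)) * (x + c ^ ((2 ^ n) ^ 2)) +
      y * (y + c) * (y + c ^ (2 ^ n)) * (y + c ^ ((2 ^ n) ^ 2)) := by
    intro x y
    linear_combination (3 * x ^ 2 * y + 3 * x * y ^ 2) * hc +
      (2 * x ^ 3 * y + 3 * x ^ 2 * y ^ 2 + 2 * x * y ^ 3 +
        x * y * (c * c ^ (2 ^ n) + c * c ^ ((2 ^ n) ^ 2) +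
          c ^ (2 ^ n) * c ^ ((2 ^ n) ^ 2))) * h2
  have hmaps : Set.MapsTo (fun x : GaloisField 2 (3 * n) =>
      x * (x + c) * (x + c ^ (2 ^ n)) * (x + c ^ ((2 ^ n) ^ 2)))
      {x | x ^ (2 ^ n) = x} {x | x ^ (2 ^ n) = x} := by
    intro x hx
    simp only [Set.mem_setOf_eq] at hx ⊢
    have hcq2 : (c ^ (2 ^ n)) ^ (2 ^ n) = c ^ ((2 ^ n) ^ 2) := by
      rw [← pow_mul, pow_two]
    have hcq3 : (c ^ ((2 ^ n) ^ 2)) ^ (2 ^ n) = c := by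
      rw [← pow_mul, mul_comm ((2 ^ n) ^ 2) (2 ^ n)]
      exact hq3 c
    rw [mul_pow, mul_pow, mul_pow, frob, frob, frob, hx, hcq2, hcq3]
    ring
  have hinj : Set.InjOn (fun x : GaloisField 2 (3 * n) =>
      x * (x + c) * (x + c ^ (2 ^ n)) * (x + c ^ ((2 ^ n) ^ 2)))
      {x | x ^ (2 ^ n) = x} := by
    intro x hx y hy hxy
    simp only [Set.mem_setOf_eq] at hx hy
    simp only at hxy
    have hxyS : (x + y) ^ (2 ^ n) = x + y := by rw [frob, hx, hy]
    have hsum : (x + y) * (x + y + c) * (x + y + c ^ (2 ^ n)) *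
        (x + y + c ^ ((2 ^ n) ^ 2)) = 0 := by
      rw [hadd, hxy]
      exact hchar _
    have h0 := (hzero (x + y) hxyS).mp hsum
    linear_combination h0 - hchar y
  exact (Set.Finite.injOn_iff_bijOn_of_mapsTo (Set.toFinite _) hmaps).mp hinj
end
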